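/- Let g₀ and g₁ be concave functions on [a,b] with a < b, and let t ∈ [a,b]. Then g₀(t) - g₁(t) ≤ ((b-t)/(b-a))(g₀(a) - g₁(a)) + ((t-a)/(b-a))(g₀(b) - g₁(b)) + ((b-t)(t-a)/(b-a))(g₀'(a+) - g₀'(b-)), where g₀'(a+) and g₀'(b-) denote the right and left derivatives of g₀. -/

import Mathlib

open Set

/-- Concave-function difference bound (Lemma `convexFunDiffs`). -/
theorem stmt0 (a b t : ℝ) (hab : a < b) (ht : t ∈ Icc a b)
    (g₀ g₁ : ℝ → ℝ)
    (hg₀ : ConcaveOn ℝ (Icc a b) g₀) (hg₁ : ConcaveOn ℝ (Icc a b) g₁)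
    (dA dB : ℝ)
    (hdA : HasDerivWithinAt g₀ dA (Icc a b) a)
    (hdB : HasDerivWithinAt g₀ dB (Icc a b) b) :
    g₀ t - g₁ t ≤ (b - t) / (b - a) * (g₀ a - g₁ a)
      + (t - a) / (b - a) * (g₀ b - g₁ b)
      + (b - t) * (t - a) / (b - a) * (dA - dB) := by
  obtain ⟨hta, htb⟩ := ht
  have hba : (0:ℝ) < b - a := by linarith
  have ha : a ∈ Icc a b := ⟨le_refl a, hab.le⟩
  have hb : b ∈ Icc a b := ⟨hab.le, le_refl b⟩
  have ht' : t ∈ Icc a b := ⟨hta, htb⟩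
  -- tangent line at a lies above g₀
  have h1 : g₀ t ≤ g₀ a + dA * (t - a) := by
    rcases eq_or_lt_of_le hta with h | h
    · simp [← h]
    · have := hg₀.slope_le_of_hasDerivWithinAt ha ht' h hdA
      rw [slope_def_field] at this
      have h0 : (0:ℝ) < t - a := by linarith
      rw [div_le_iff₀ h0] at this
      linarith
  -- tangent line at b lies above g₀
  have h2 : g₀ t ≤ g₀ b + dB * (t - b) := by
    rcases eq_or_lt_of_le htb with h | h
    · simp [h]
    · have := hg₀.le_slope_of_hasDerivWithinAt ht' hb h hdB
      rw [slope_def_field] at this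
      have h0 : (0:ℝ) < b - t := by linarith
      rw [le_div_iff₀ h0] at this
      linarith
  -- concavity of g₁
  have h3 : (b - t) / (b - a) * g₁ a + (t - a) / (b - a) * g₁ b ≤ g₁ t := by
    have hl : (0:ℝ) ≤ (b - t) / (b - a) := div_nonneg (by linarith) hba.le
    have hm : (0:ℝ) ≤ (t - a) / (b - a) := div_nonneg (by linarith) hba.le
    have hs : (b - t) / (b - a) + (t - a) / (b - a) = 1 := by
      field_simp
      ring
    have := hg₁.2 ha hb hl hm hs
    simp only [smul_eq_mul] at this
    have heq : (b - t) / (b - a) * a + (t - a) / (b - a) * b = t := by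
      field_simp
      ring
    rw [heq] at this
    exact this
  -- combine: weight h1 by (b-t)/(b-a) and h2 by (t-a)/(b-a)
  have hl : (0:ℝ) ≤ (b - t) / (b - a) := div_nonneg (by linarith) hba.le
  have hm : (0:ℝ) ≤ (t - a) / (b - a) := div_nonneg (by linarith) hba.le
  have hs : (b - t) / (b - a) + (t - a) / (b - a) = 1 := by field_simp; ring
  have h4 : g₀ t ≤ (b - t) / (b - a) * (g₀ a + dA * (t - a))
      + (t - a) / (b - a) * (g₀ b + dB * (t - b)) := by
    calc g₀ t = ((b - t) / (b - a) + (t - a) / (b - a)) * g₀ t := by rw [hs]; ring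
    _ ≤ _ := by
        rw [add_mul]
        gcongr
  have key : (b - t) / (b - a) * (dA * (t - a)) + (t - a) / (b - a) * (dB * (t - b))
      = (b - t) * (t - a) / (b - a) * (dA - dB) := by
    field_simp
    ring
  linarith [h4, h3, key]
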